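/- Let H_U ∈ ℝ^{n_U×n_U}, H_V ∈ ℝ^{n_V×n_V}, H_U^Γ ∈ ℝ^{m_U×m_U}, H_V^Γ ∈ ℝ^{m_V×m_V} be symmetric positive definite. Let e_E, d_E ∈ ℝ^{n_U×m_U}, e_W, d_W ∈ ℝ^{n_V×m_V}, and suppose there exist symmetric positive semidefinite M_U, M_V with H_U D_Δ^U = e_E H_U^Γ d_Eᵀ − M_U and H_V D_Δ^V = e_W H_V^Γ d_Wᵀ − M_V. Let the interpolation matrices satisfy H_U^Γ I_{v2u}^b = (I_{u2v}^g)ᵀ H_V^Γ and (I_{v2u}^g)ᵀ H_U^Γ = H_V^Γ I_{u2v}^b. Let c₁², c₂², h_u, h_v > 0 and let the penalty parameters satisfy σ_v = τ_u and σ_u = τ_v. Suppose u: ℝ → ℝ^{n_U}, v: ℝ → ℝ^{n_V} are twice differentiable and satisfy u'' = c₁² D_Δ^U u − H_U^{-1}[ (τ_u/h_u) c₁² e_E H_U^Γ (e_Eᵀu − I_{v2u}^g e_Wᵀv) + (σ_u/h_v) c₂² e_E H_U^Γ I_{v2u}^b (I_{u2v}^g e_Eᵀu − e_Wᵀv) ]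 + H_U^{-1}[ (c₁²/2) d_E H_U^Γ (e_Eᵀu − I_{v2u}^g e_Wᵀv) − (1/2) e_E H_U^Γ (c₁² d_Eᵀu + c₂² I_{v2u}^b d_Wᵀv) ], and v'' = c₂² D_Δ^V v − H_V^{-1}[ (τ_v/h_v) c₂² e_W H_V^Γ (e_Wᵀv − I_{u2v}^g e_Eᵀu) + (σ_v/h_u) c₁² e_W H_V^Γ I_{u2v}^b (I_{v2u}^g e_Wᵀv − e_Eᵀu) ] + H_V^{-1}[ (c₂²/2) d_W H_V^Γ (e_Wᵀv − I_{u2v}^g e_Eᵀu) − (1/2) e_W H_V^Γ (c₂² d_Wᵀv + c₁² I_{u2v}^b d_Eᵀu) ]. Define the discrete energy E(t) = (1/2)[ u'ᵀH_U u' + v'ᵀH_V v' + c₁² uᵀM_U u + c₂² vᵀM_V v + c₁² A_u + c₂² A_v ], where A_u = (τ_u/h_u)(e_Eᵀu − I_{v2u}^g e_Wᵀv)ᵀH_U^Γ(e_Eᵀu − I_{v2u}^g e_Wᵀv) − (d_Eᵀu)ᵀH_U^Γ(e_Eᵀu − I_{v2u}^g e_Wᵀv) and A_v = (τ_v/h_v)(e_Wᵀv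 − I_{u2v}^g e_Eᵀu)ᵀH_V^Γ(e_Wᵀv − I_{u2v}^g e_Eᵀu) − (d_Wᵀv)ᵀH_V^Γ(e_Wᵀv − I_{u2v}^g e_Eᵀu). Then dE/dt = 0 for all t. -/

import Mathlib

open Matrix

lemma sbp_hasDerivAt_mulVec {n m : ℕ} (A : Matrix (Fin n) (Fin m) ℝ)
    {f : ℝ → Fin m → ℝ} {f' : Fin m → ℝ} {t : ℝ} (hf : HasDerivAt f f' t) :
    HasDerivAt (fun s => A *ᵥ f s) (A *ᵥ f') t := by
  rw [hasDerivAt_pi]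
  intro i
  simp only [Matrix.mulVec, dotProduct]
  exact HasDerivAt.fun_sum fun j _ => ((hasDerivAt_pi.1 hf) j).const_mul (A i j)

lemma sbp_hasDerivAt_dot {n : ℕ} {f g : ℝ → Fin n → ℝ} {f' g' : Fin n → ℝ} {t : ℝ}
    (hf : HasDerivAt f f' t) (hg : HasDerivAt g g' t) :
    HasDerivAt (fun s => f s ⬝ᵥ g s) (f' ⬝ᵥ g t + f t ⬝ᵥ g') t := by
  simp only [dotProduct]
  rw [← Finset.sum_add_distrib]
  exact HasDerivAt.fun_sum fun i _ => ((hasDerivAt_pi.1 hf) i).mul ((hasDerivAt_pi.1 hg) i)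

lemma sbp_hasDerivAt_dotmul {n m : ℕ} (A : Matrix (Fin n) (Fin m) ℝ)
    {f : ℝ → Fin n → ℝ} {f' : Fin n → ℝ} {g : ℝ → Fin m → ℝ} {g' : Fin m → ℝ} {t : ℝ}
    (hf : HasDerivAt f f' t) (hg : HasDerivAt g g' t) :
    HasDerivAt (fun s => f s ⬝ᵥ A *ᵥ g s) ((f' ⬝ᵥ (A *ᵥ g t)) + (f t ⬝ᵥ (A *ᵥ g'))) t :=
  sbp_hasDerivAt_dot hf (sbp_hasDerivAt_mulVec A hg)

lemma sbp_dot_symm {n : ℕ} {A : Matrix (Fin n) (Fin n) ℝ} (hA : Aᵀ = A) (x y : Fin n → ℝ) :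
    x ⬝ᵥ A *ᵥ y = y ⬝ᵥ A *ᵥ x := by
  rw [Matrix.dotProduct_mulVec, ← Matrix.mulVec_transpose, hA, dotProduct_comm]

lemma sbp_dot_pull {n m : ℕ} (A : Matrix (Fin n) (Fin m) ℝ) (x : Fin m → ℝ) (y : Fin n → ℝ) :
    (A *ᵥ x) ⬝ᵥ y = x ⬝ᵥ (Aᵀ *ᵥ y) := by
  rw [dotProduct_comm, Matrix.dotProduct_mulVec, ← Matrix.mulVec_transpose]
  exact dotProduct_comm _ _

lemma sbp_dot_left {n m : ℕ} (A : Matrix (Fin n) (Fin m) ℝ) (x : Fin n → ℝ) (y : Fin m → ℝ) :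
    x ⬝ᵥ A *ᵥ y = (Aᵀ *ᵥ x) ⬝ᵥ y := by
  rw [Matrix.dotProduct_mulVec, Matrix.mulVec_transpose]

lemma sbp_dot_flip {n m : ℕ} (M : Matrix (Fin n) (Fin m) ℝ) (x : Fin n → ℝ) (y : Fin m → ℝ) :
    x ⬝ᵥ M *ᵥ y = y ⬝ᵥ Mᵀ *ᵥ x := by
  rw [sbp_dot_left, dotProduct_comm]



/-- Energy conservation for the SBP-SAT semi-discretization of the second order wave equation
`u_tt = c₁²Δu`, `v_tt = c₂²Δv` coupled at a non-conforming interface with order preserving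
interpolation operators and penalty parameters satisfying `σ_v = τ_u`, `σ_u = τ_v`:
the discrete energy `E` is conserved, `dE/dt = 0`. -/
theorem stmt8 {nU nV mU mV : ℕ}
    (HU : Matrix (Fin nU) (Fin nU) ℝ) (HV : Matrix (Fin nV) (Fin nV) ℝ)
    (HUΓ : Matrix (Fin mU) (Fin mU) ℝ) (HVΓ : Matrix (Fin mV) (Fin mV) ℝ)
    (hHU : HU.PosDef) (hHV : HV.PosDef) (hHUΓ : HUΓ.PosDef) (hHVΓ : HVΓ.PosDef)
    (eE dE : Matrix (Fin nU) (Fin mU) ℝ) (eW dW : Matrix (Fin nV) (Fin mV) ℝ)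
    (DΔU : Matrix (Fin nU) (Fin nU) ℝ) (DΔV : Matrix (Fin nV) (Fin nV) ℝ)
    (MU : Matrix (Fin nU) (Fin nU) ℝ) (MV : Matrix (Fin nV) (Fin nV) ℝ)
    (hMU : MU.PosSemidef) (hMV : MV.PosSemidef)
    (hSBPU : HU * DΔU = eE * HUΓ * dEᵀ - MU)
    (hSBPV : HV * DΔV = eW * HVΓ * dWᵀ - MV)
    (Ivug Ivub : Matrix (Fin mU) (Fin mV) ℝ) (Iuvg Iuvb : Matrix (Fin mV) (Fin mU) ℝ)
    (hadj1 : HUΓ * Ivub = Iuvgᵀ * HVΓ)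
    (hadj2 : Ivugᵀ * HUΓ = HVΓ * Iuvb)
    (c1sq c2sq hu hv : ℝ) (hc1 : 0 < c1sq) (hc2 : 0 < c2sq) (hhu : 0 < hu) (hhv : 0 < hv)
    (τu τv σu σv : ℝ) (hσv : σv = τu) (hσu : σu = τv)
    (u u' : ℝ → Fin nU → ℝ) (v v' : ℝ → Fin nV → ℝ)
    (hu' : ∀ t : ℝ, HasDerivAt u (u' t) t)
    (hv' : ∀ t : ℝ, HasDerivAt v (v' t) t)
    (hu'' : ∀ t : ℝ, HasDerivAt u'
      (c1sq • (DΔU *ᵥ u t)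
        - HU⁻¹ *ᵥ
            ((τu / hu * c1sq) • (eE *ᵥ (HUΓ *ᵥ (eEᵀ *ᵥ u t - Ivug *ᵥ (eWᵀ *ᵥ v t))))
              + (σu / hv * c2sq) •
                  (eE *ᵥ (HUΓ *ᵥ (Ivub *ᵥ (Iuvg *ᵥ (eEᵀ *ᵥ u t) - eWᵀ *ᵥ v t)))))
        + HU⁻¹ *ᵥ
            ((c1sq / 2) • (dE *ᵥ (HUΓ *ᵥ (eEᵀ *ᵥ u t - Ivug *ᵥ (eWᵀ *ᵥ v t))))
              - ((1 : ℝ) / 2) •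
                  (eE *ᵥ (HUΓ *ᵥ (c1sq • (dEᵀ *ᵥ u t) + c2sq • (Ivub *ᵥ (dWᵀ *ᵥ v t))))))) t)
    (hv'' : ∀ t : ℝ, HasDerivAt v'
      (c2sq • (DΔV *ᵥ v t)
        - HV⁻¹ *ᵥ
            ((τv / hv * c2sq) • (eW *ᵥ (HVΓ *ᵥ (eWᵀ *ᵥ v t - Iuvg *ᵥ (eEᵀ *ᵥ u t))))
              + (σv / hu * c1sq) •
                  (eW *ᵥ (HVΓ *ᵥ (Iuvb *ᵥ (Ivug *ᵥ (eWᵀ *ᵥ v t) - eEᵀ *ᵥ u t)))))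
        + HV⁻¹ *ᵥ
            ((c2sq / 2) • (dW *ᵥ (HVΓ *ᵥ (eWᵀ *ᵥ v t - Iuvg *ᵥ (eEᵀ *ᵥ u t))))
              - ((1 : ℝ) / 2) •
                  (eW *ᵥ (HVΓ *ᵥ (c2sq • (dWᵀ *ᵥ v t) + c1sq • (Iuvb *ᵥ (dEᵀ *ᵥ u t))))))) t) :
    ∀ t : ℝ,
      HasDerivAt (fun s =>
        (1 / 2 : ℝ) *
          (u' s ⬝ᵥ HU *ᵥ u' s + v' s ⬝ᵥ HV *ᵥ v' s
            + c1sq * (u s ⬝ᵥ MU *ᵥ u s) + c2sq * (v s ⬝ᵥ MV *ᵥ v s)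
            + c1sq *
                ((τu / hu) *
                    ((eEᵀ *ᵥ u s - Ivug *ᵥ (eWᵀ *ᵥ v s)) ⬝ᵥ
                      HUΓ *ᵥ (eEᵀ *ᵥ u s - Ivug *ᵥ (eWᵀ *ᵥ v s)))
                  - (dEᵀ *ᵥ u s) ⬝ᵥ HUΓ *ᵥ (eEᵀ *ᵥ u s - Ivug *ᵥ (eWᵀ *ᵥ v s)))
            + c2sq *
                ((τv / hv) *
                    ((eWᵀ *ᵥ v s - Iuvg *ᵥ (eEᵀ *ᵥ u s)) ⬝ᵥ
                      HVΓ *ᵥ (eWᵀ *ᵥ v s - Iuvg *ᵥ (eEᵀ *ᵥ u s)))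
                  - (dWᵀ *ᵥ v s) ⬝ᵥ HVΓ *ᵥ (eWᵀ *ᵥ v s - Iuvg *ᵥ (eEᵀ *ᵥ u s)))))
        0 t := by

  intro t
  have hA' : HasDerivAt (fun s => eEᵀ *ᵥ u s) (eEᵀ *ᵥ u' t) t := sbp_hasDerivAt_mulVec _ (hu' t)
  have hB' : HasDerivAt (fun s => eWᵀ *ᵥ v s) (eWᵀ *ᵥ v' t) t := sbp_hasDerivAt_mulVec _ (hv' t)
  have hP' : HasDerivAt (fun s => dEᵀ *ᵥ u s) (dEᵀ *ᵥ u' t) t := sbp_hasDerivAt_mulVec _ (hu' t)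
  have hQ' : HasDerivAt (fun s => dWᵀ *ᵥ v s) (dWᵀ *ᵥ v' t) t := sbp_hasDerivAt_mulVec _ (hv' t)
  have hxi : HasDerivAt (fun s => eEᵀ *ᵥ u s - Ivug *ᵥ (eWᵀ *ᵥ v s))
      (eEᵀ *ᵥ u' t - Ivug *ᵥ (eWᵀ *ᵥ v' t)) t := hA'.sub (sbp_hasDerivAt_mulVec _ hB')
  have heta : HasDerivAt (fun s => eWᵀ *ᵥ v s - Iuvg *ᵥ (eEᵀ *ᵥ u s))
      (eWᵀ *ᵥ v' t - Iuvg *ᵥ (eEᵀ *ᵥ u' t)) t := hB'.sub (sbp_hasDerivAt_mulVec _ hA')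
  have h1 := sbp_hasDerivAt_dotmul HU (hu'' t) (hu'' t)
  have h2 := sbp_hasDerivAt_dotmul HV (hv'' t) (hv'' t)
  have h3 := (sbp_hasDerivAt_dotmul MU (hu' t) (hu' t)).const_mul c1sq
  have h4 := (sbp_hasDerivAt_dotmul MV (hv' t) (hv' t)).const_mul c2sq
  have h5 := (((sbp_hasDerivAt_dotmul HUΓ hxi hxi).const_mul (τu/hu)).sub
      (sbp_hasDerivAt_dotmul HUΓ hP' hxi)).const_mul c1sq
  have h6 := (((sbp_hasDerivAt_dotmul HVΓ heta heta).const_mul (τv/hv)).sub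
      (sbp_hasDerivAt_dotmul HVΓ hQ' heta)).const_mul c2sq
  have hE := (((((h1.add h2).add h3).add h4).add h5).add h6).const_mul (1/2 : ℝ)
  convert hE using 2
  case e'_4 => rfl
  case e'_5 => rfl
  case e'_8 => rfl
  subst hσv hσu
  have hdu : IsUnit HU.det := hHU.det_pos.ne'.isUnit
  have hdv : IsUnit HV.det := hHV.det_pos.ne'.isUnit
  have hsymU : HUᵀ = HU := by simpa [Matrix.IsSymm] using hHU.isHermitian
  have hsymV : HVᵀ = HV := by simpa [Matrix.IsSymm] using hHV.isHermitian
  have hsymUΓ : HUΓᵀ = HUΓ := by simpa [Matrix.IsSymm] using hHUΓ.isHermitian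
  have hsymVΓ : HVΓᵀ = HVΓ := by simpa [Matrix.IsSymm] using hHVΓ.isHermitian
  have hsymMU : MUᵀ = MU := by simpa [Matrix.IsSymm] using hMU.isHermitian
  have hsymMV : MVᵀ = MV := by simpa [Matrix.IsSymm] using hMV.isHermitian
  have hinvU : HU⁻¹ * HU = 1 := Matrix.nonsing_inv_mul _ hdu
  have hinvV : HV⁻¹ * HV = 1 := Matrix.nonsing_inv_mul _ hdv
  have hDU : DΔUᵀ * HU = dE * (HUΓ * eEᵀ) - MU := by
    rw [← hsymU, ← Matrix.transpose_mul, hSBPU]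
    simp [Matrix.transpose_sub, Matrix.transpose_mul, hsymUΓ, hsymMU, Matrix.mul_assoc]
  have hDV : DΔVᵀ * HV = dW * (HVΓ * eWᵀ) - MV := by
    rw [← hsymV, ← Matrix.transpose_mul, hSBPV]
    simp [Matrix.transpose_sub, Matrix.transpose_mul, hsymVΓ, hsymMV, Matrix.mul_assoc]
  have hcanU : ∀ {k : ℕ} (B : Matrix (Fin nU) (Fin k) ℝ), HU * (HU⁻¹ * B) = B :=
    fun B => Matrix.mul_nonsing_inv_cancel_left _ _ hdu
  have hcanV : ∀ {k : ℕ} (B : Matrix (Fin nV) (Fin k) ℝ), HV * (HV⁻¹ * B) = B :=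
    fun B => Matrix.mul_nonsing_inv_cancel_left _ _ hdv
  have hadj1' : ∀ {k : ℕ} (B : Matrix (Fin mV) (Fin k) ℝ), HUΓ * (Ivub * B) = Iuvgᵀ * (HVΓ * B) := by
    intro k B; rw [← Matrix.mul_assoc, hadj1, Matrix.mul_assoc]
  have hadj2' : ∀ {k : ℕ} (B : Matrix (Fin mU) (Fin k) ℝ), HVΓ * (Iuvb * B) = Ivugᵀ * (HUΓ * B) := by
    intro k B; rw [← Matrix.mul_assoc, ← hadj2, Matrix.mul_assoc]
  simp only [Matrix.mulVec_add, Matrix.mulVec_sub, Matrix.mulVec_smul, Matrix.mulVec_mulVec,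
    Matrix.sub_mulVec, Matrix.add_mulVec, Matrix.mul_assoc, hSBPU, hSBPV, hcanU, hcanV,
    hadj1', hadj2', dotProduct_add, dotProduct_sub, add_dotProduct,
    sub_dotProduct, dotProduct_smul, smul_dotProduct, smul_eq_mul,
    sbp_dot_pull, Matrix.transpose_mul, Matrix.transpose_transpose,
    Matrix.transpose_nonsing_inv, hinvU, hinvV, hDU, hDV, Matrix.mul_one,
    hsymU, hsymV, hsymUΓ, hsymVΓ, hsymMU, hsymMV]
  have f1 : u t ⬝ᵥ (dE * (HUΓ * eEᵀ)) *ᵥ u' t = u' t ⬝ᵥ (eE * (HUΓ * dEᵀ)) *ᵥ u t := by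
    rw [sbp_dot_flip]
    simp [Matrix.transpose_mul, Matrix.transpose_transpose, Matrix.mul_assoc,
      hsymUΓ, hsymVΓ, hsymMU, hsymMV]
  have f2 : u t ⬝ᵥ (MU) *ᵥ u' t = u' t ⬝ᵥ (MU) *ᵥ u t := by
    rw [sbp_dot_flip]
    simp [Matrix.transpose_mul, Matrix.transpose_transpose, Matrix.mul_assoc,
      hsymUΓ, hsymVΓ, hsymMU, hsymMV]
  have f3 : u t ⬝ᵥ (eE * (HUΓ * eEᵀ)) *ᵥ u' t = u' t ⬝ᵥ (eE * (HUΓ * eEᵀ)) *ᵥ u t := by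
    rw [sbp_dot_flip]
    simp [Matrix.transpose_mul, Matrix.transpose_transpose, Matrix.mul_assoc,
      hsymUΓ, hsymVΓ, hsymMU, hsymMV]
  have f4 : v t ⬝ᵥ (eW * (Ivugᵀ * (HUΓ * eEᵀ))) *ᵥ u' t = u' t ⬝ᵥ (eE * (HUΓ * (Ivug * eWᵀ))) *ᵥ v t := by
    rw [sbp_dot_flip]
    simp [Matrix.transpose_mul, Matrix.transpose_transpose, Matrix.mul_assoc,
      hsymUΓ, hsymVΓ, hsymMU, hsymMV]
  have f5 : u t ⬝ᵥ (eE * (Iuvgᵀ * (HVΓ * (Iuvg * eEᵀ)))) *ᵥ u' t = u' t ⬝ᵥ (eE * (Iuvgᵀ * (HVΓ * (Iuvg * eEᵀ)))) *ᵥ u t := by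
    rw [sbp_dot_flip]
    simp [Matrix.transpose_mul, Matrix.transpose_transpose, Matrix.mul_assoc,
      hsymUΓ, hsymVΓ, hsymMU, hsymMV]
  have f6 : v t ⬝ᵥ (eW * (HVΓ * (Iuvg * eEᵀ))) *ᵥ u' t = u' t ⬝ᵥ (eE * (Iuvgᵀ * (HVΓ * eWᵀ))) *ᵥ v t := by
    rw [sbp_dot_flip]
    simp [Matrix.transpose_mul, Matrix.transpose_transpose, Matrix.mul_assoc,
      hsymUΓ, hsymVΓ, hsymMU, hsymMV]
  have f7 : u t ⬝ᵥ (eE * (HUΓ * dEᵀ)) *ᵥ u' t = u' t ⬝ᵥ (dE * (HUΓ * eEᵀ)) *ᵥ u t := by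
    rw [sbp_dot_flip]
    simp [Matrix.transpose_mul, Matrix.transpose_transpose, Matrix.mul_assoc,
      hsymUΓ, hsymVΓ, hsymMU, hsymMV]
  have f8 : v t ⬝ᵥ (eW * (Ivugᵀ * (HUΓ * dEᵀ))) *ᵥ u' t = u' t ⬝ᵥ (dE * (HUΓ * (Ivug * eWᵀ))) *ᵥ v t := by
    rw [sbp_dot_flip]
    simp [Matrix.transpose_mul, Matrix.transpose_transpose, Matrix.mul_assoc,
      hsymUΓ, hsymVΓ, hsymMU, hsymMV]
  have f9 : v t ⬝ᵥ (dW * (HVΓ * (Iuvg * eEᵀ))) *ᵥ u' t = u' t ⬝ᵥ (eE * (Iuvgᵀ * (HVΓ * dWᵀ))) *ᵥ v t := by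
    rw [sbp_dot_flip]
    simp [Matrix.transpose_mul, Matrix.transpose_transpose, Matrix.mul_assoc,
      hsymUΓ, hsymVΓ, hsymMU, hsymMV]
  have f10 : v t ⬝ᵥ (dW * (HVΓ * eWᵀ)) *ᵥ v' t = v' t ⬝ᵥ (eW * (HVΓ * dWᵀ)) *ᵥ v t := by
    rw [sbp_dot_flip]
    simp [Matrix.transpose_mul, Matrix.transpose_transpose, Matrix.mul_assoc,
      hsymUΓ, hsymVΓ, hsymMU, hsymMV]
  have f11 : v t ⬝ᵥ (MV) *ᵥ v' t = v' t ⬝ᵥ (MV) *ᵥ v t := by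
    rw [sbp_dot_flip]
    simp [Matrix.transpose_mul, Matrix.transpose_transpose, Matrix.mul_assoc,
      hsymUΓ, hsymVΓ, hsymMU, hsymMV]
  have f12 : v t ⬝ᵥ (eW * (HVΓ * eWᵀ)) *ᵥ v' t = v' t ⬝ᵥ (eW * (HVΓ * eWᵀ)) *ᵥ v t := by
    rw [sbp_dot_flip]
    simp [Matrix.transpose_mul, Matrix.transpose_transpose, Matrix.mul_assoc,
      hsymUΓ, hsymVΓ, hsymMU, hsymMV]
  have f13 : u t ⬝ᵥ (eE * (Iuvgᵀ * (HVΓ * eWᵀ))) *ᵥ v' t = v' t ⬝ᵥ (eW * (HVΓ * (Iuvg * eEᵀ))) *ᵥ u t := by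
    rw [sbp_dot_flip]
    simp [Matrix.transpose_mul, Matrix.transpose_transpose, Matrix.mul_assoc,
      hsymUΓ, hsymVΓ, hsymMU, hsymMV]
  have f14 : v t ⬝ᵥ (eW * (Ivugᵀ * (HUΓ * (Ivug * eWᵀ)))) *ᵥ v' t = v' t ⬝ᵥ (eW * (Ivugᵀ * (HUΓ * (Ivug * eWᵀ)))) *ᵥ v t := by
    rw [sbp_dot_flip]
    simp [Matrix.transpose_mul, Matrix.transpose_transpose, Matrix.mul_assoc,
      hsymUΓ, hsymVΓ, hsymMU, hsymMV]
  have f15 : u t ⬝ᵥ (eE * (HUΓ * (Ivug * eWᵀ))) *ᵥ v' t = v' t ⬝ᵥ (eW * (Ivugᵀ * (HUΓ * eEᵀ))) *ᵥ u t := by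
    rw [sbp_dot_flip]
    simp [Matrix.transpose_mul, Matrix.transpose_transpose, Matrix.mul_assoc,
      hsymUΓ, hsymVΓ, hsymMU, hsymMV]
  have f16 : u t ⬝ᵥ (eE * (Iuvgᵀ * (HVΓ * dWᵀ))) *ᵥ v' t = v' t ⬝ᵥ (dW * (HVΓ * (Iuvg * eEᵀ))) *ᵥ u t := by
    rw [sbp_dot_flip]
    simp [Matrix.transpose_mul, Matrix.transpose_transpose, Matrix.mul_assoc,
      hsymUΓ, hsymVΓ, hsymMU, hsymMV]
  have f17 : u t ⬝ᵥ (dE * (HUΓ * (Ivug * eWᵀ))) *ᵥ v' t = v' t ⬝ᵥ (eW * (Ivugᵀ * (HUΓ * dEᵀ))) *ᵥ u t := by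
    rw [sbp_dot_flip]
    simp [Matrix.transpose_mul, Matrix.transpose_transpose, Matrix.mul_assoc,
      hsymUΓ, hsymVΓ, hsymMU, hsymMV]
  have f18 : v t ⬝ᵥ (eW * (HVΓ * dWᵀ)) *ᵥ v' t = v' t ⬝ᵥ (dW * (HVΓ * eWᵀ)) *ᵥ v t := by
    rw [sbp_dot_flip]
    simp [Matrix.transpose_mul, Matrix.transpose_transpose, Matrix.mul_assoc,
      hsymUΓ, hsymVΓ, hsymMU, hsymMV]
  simp only [f18, f1, f2, f3, f4, f5, f6, f7, f8, f9, f10, f11, f12, f13, f14, f15, f16, f17]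
  ring
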